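/- Let q be a prime power and d a divisor of q−1. Let h(x) = Σ_{i=1}^{t} c_i x^{e_i} ∈ F_q[x] with (q−1)/d ≥ e_1 > e_2 > ⋯ > e_t and all c_i nonzero, and let δ = max{e_{i−1} − e_i : 2 ≤ i ≤ t} be the largest gap between consecutive exponents. If h does not vanish identically on any coset of (F_q^*)^d, then the number of distinct roots of h in F_q^* is at most q − 1 − dδ. -/

import Mathlib

open Polynomial

theorem coset_bound13 {F : Type*} [Field F] [Fintype F] [DecidableEq F]
    (d : ℕ) (hd0 : 0 < d) (t i₀ : ℕ) (hi₀ : 1 ≤ i₀) (hi₀t : i₀ < t)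
    (b : ℕ → F) (e : ℕ → ℕ)
    (he : ∀ i, ∀ j, i < j → j < t → e j < e i)
    (he0 : d * e 0 ≤ Fintype.card F - 1)
    (f : F[X]) (hf : f = ∑ i ∈ Finset.range t, C (b i) * X ^ (d * e i))
    (hnz : ∃ y : F, y ≠ 0 ∧ f.eval y ≠ 0) :
    d * (e (i₀ - 1) - e i₀) ≤
      (Finset.univ.filter (fun y : F => y ≠ 0 ∧ f.eval y ≠ 0)).card := by
  classical
  set q' := Fintype.card F - 1 with hq'
  set A := d * e i₀ with hA
  set B := d * e (i₀ - 1) with hB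
  have hei : e i₀ < e (i₀ - 1) := he _ _ (by omega) hi₀t
  have hAB : A ≤ B := Nat.mul_le_mul_left d hei.le
  have hBAeq : d * (e (i₀ - 1) - e i₀) = B - A := Nat.mul_sub d _ _
  have hele0 : ∀ i < t, e i ≤ e 0 := by
    intro i hi
    rcases Nat.eq_zero_or_pos i with h0 | h0
    · simp [h0]
    · exact (he 0 i h0 hi).le
  have hBq : B ≤ q' :=
    le_trans (Nat.mul_le_mul_left d (hele0 _ (by omega))) he0
  have hBle : ∀ i < i₀, B ≤ d * e i := by
    intro i hi
    apply Nat.mul_le_mul_left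
    rcases Nat.lt_or_ge i (i₀ - 1) with h1 | h1
    · exact (he i (i₀ - 1) h1 (by omega)).le
    · have h2 : i = i₀ - 1 := by omega
      rw [h2]
  set G : F[X] := ∑ i ∈ Finset.range i₀, C (b i) * X ^ (d * e i - B) with hG
  set R : F[X] := ∑ i ∈ Finset.Ico i₀ t, C (b i) * X ^ (d * e i) with hR
  set P : F[X] := G + X ^ (q' - B) * R with hP
  have heval : ∀ y : F, y ≠ 0 → y ^ B * P.eval y = f.eval y := by
    intro y hy
    have hy1 : y ^ q' = 1 := FiniteField.pow_card_sub_one_eq_one y hy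
    have hGf : y ^ B * G.eval y = ∑ i ∈ Finset.range i₀, b i * y ^ (d * e i) := by
      rw [hG, eval_finset_sum, Finset.mul_sum]
      refine Finset.sum_congr rfl fun i hi => ?_
      rw [Finset.mem_range] at hi
      rw [eval_mul, eval_C, eval_pow, eval_X, mul_left_comm, ← pow_add,
        Nat.add_sub_cancel' (hBle i hi)]
    have hRf : y ^ B * (X ^ (q' - B) * R).eval y
        = ∑ i ∈ Finset.Ico i₀ t, b i * y ^ (d * e i) := by
      rw [eval_mul, eval_pow, eval_X, ← mul_assoc, ← pow_add,
        Nat.add_sub_cancel' hBq, hy1, one_mul, hR, eval_finset_sum]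
      refine Finset.sum_congr rfl fun i _ => ?_
      rw [eval_mul, eval_C, eval_pow, eval_X]
    calc y ^ B * P.eval y
        = y ^ B * G.eval y + y ^ B * (X ^ (q' - B) * R).eval y := by
          rw [hP, eval_add, mul_add]
      _ = ∑ i ∈ Finset.range t, b i * y ^ (d * e i) := by
          rw [hGf, hRf, Finset.range_eq_Ico,
            Finset.sum_Ico_consecutive _ (Nat.zero_le i₀) hi₀t.le, Finset.range_eq_Ico]
      _ = f.eval y := by
          rw [hf, eval_finset_sum]
          refine (Finset.sum_congr rfl fun i _ => ?_).symm
          rw [eval_mul, eval_C, eval_pow, eval_X]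
  obtain ⟨y₀, hy₀, hfy₀⟩ := hnz
  have hPne : P ≠ 0 := by
    intro hP0
    apply hfy₀
    rw [← heval y₀ hy₀, hP0, eval_zero, mul_zero]
  have hdegG : G.natDegree ≤ d * e 0 - B := by
    refine natDegree_sum_le_of_forall_le _ _ fun i hi => ?_
    refine le_trans (natDegree_C_mul_X_pow_le _ _) ?_
    exact Nat.sub_le_sub_right (Nat.mul_le_mul_left d (hele0 i (by
      rw [Finset.mem_range] at hi; omega))) B
  have hdegR : R.natDegree ≤ A := by
    refine natDegree_sum_le_of_forall_le _ _ fun i hi => ?_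
    refine le_trans (natDegree_C_mul_X_pow_le _ _) ?_
    apply Nat.mul_le_mul_left
    rw [Finset.mem_Ico] at hi
    rcases eq_or_lt_of_le hi.1 with h1 | h1
    · rw [← h1]
    · exact (he i₀ i h1 hi.2).le
  have hdegP : P.natDegree ≤ q' - (B - A) := by
    refine le_trans (natDegree_add_le _ _) (max_le ?_ ?_)
    · refine le_trans hdegG (le_trans (Nat.sub_le_sub_right he0 B) ?_)
      exact Nat.sub_le_sub_left (Nat.sub_le B A) q'
    · refine le_trans (natDegree_mul_le) ?_
      rw [natDegree_X_pow]
      have : q' - B + A ≤ q' - (B - A) := by omega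
      exact le_trans (Nat.add_le_add_left hdegR _) this
  have hroots : (Finset.univ.filter (fun y : F => y ≠ 0 ∧ f.eval y = 0)).card
      ≤ q' - (B - A) := by
    have hsub : (Finset.univ.filter (fun y : F => y ≠ 0 ∧ f.eval y = 0))
        ⊆ P.roots.toFinset := by
      intro y hy
      rw [Finset.mem_filter] at hy
      obtain ⟨-, hy0, hyf⟩ := hy
      rw [Multiset.mem_toFinset, mem_roots hPne]
      have := heval y hy0
      rw [hyf] at this
      exact (mul_eq_zero.mp this).resolve_left (pow_ne_zero _ hy0)
    calc (Finset.univ.filter (fun y : F => y ≠ 0 ∧ f.eval y = 0)).card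
        ≤ P.roots.toFinset.card := Finset.card_le_card hsub
      _ ≤ Multiset.card P.roots := P.roots.toFinset_card_le
      _ ≤ P.natDegree := P.card_roots'
      _ ≤ q' - (B - A) := hdegP
  have hsum : (Finset.univ.filter (fun y : F => y ≠ 0 ∧ f.eval y ≠ 0)).card
      + (Finset.univ.filter (fun y : F => y ≠ 0 ∧ f.eval y = 0)).card = q' := by
    have e1 : Finset.univ.filter (fun y : F => y ≠ 0 ∧ f.eval y ≠ 0)
        = ((Finset.univ : Finset F).erase 0).filter (fun y => f.eval y ≠ 0) := by
      ext y; simp [Finset.mem_erase, and_comm]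
    have e2 : Finset.univ.filter (fun y : F => y ≠ 0 ∧ f.eval y = 0)
        = ((Finset.univ : Finset F).erase 0).filter (fun y => ¬ f.eval y ≠ 0) := by
      ext y; simp [Finset.mem_erase, and_comm]
    rw [e1, e2, Finset.card_filter_add_card_filter_not,
      Finset.card_erase_of_mem (Finset.mem_univ 0), Finset.card_univ]
  rw [hBAeq]
  omega

theorem stmt_13 {F : Type*} [Field F] [Fintype F] [DecidableEq F]
    (d : ℕ) (hd0 : 0 < d) (hd : d ∣ Fintype.card F - 1)
    (t : ℕ) (ht : 2 ≤ t) (c : ℕ → F) (e : ℕ → ℕ)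
    (hc : ∀ i < t, c i ≠ 0)
    (he : ∀ i, ∀ j, i < j → j < t → e j < e i)
    (he1 : e 0 ≤ (Fintype.card F - 1) / d)
    (h : F[X]) (hh : h = ∑ i ∈ Finset.range t, C (c i) * X ^ (e i))
    (δ : ℕ)
    (hδub : ∀ i, 1 ≤ i → i < t → e (i - 1) - e i ≤ δ)
    (hδmem : ∃ i, 1 ≤ i ∧ i < t ∧ e (i - 1) - e i = δ)
    (hnv : ∀ x₀ : F, x₀ ≠ 0 → ∃ y : F, y ≠ 0 ∧ h.eval (x₀ * y ^ d) ≠ 0) :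
    (Finset.univ.filter (fun x : F => x ≠ 0 ∧ h.eval x = 0)).card
      ≤ Fintype.card F - 1 - d * δ := by
  classical
  obtain ⟨i₀, hi₀1, hi₀t, hi₀δ⟩ := hδmem
  set q' := Fintype.card F - 1 with hq'
  have hq'pos : 0 < q' := by
    have h2 : 1 < Fintype.card F := Fintype.one_lt_card
    omega
  have he0 : d * e 0 ≤ q' := by
    calc d * e 0 ≤ d * (q' / d) := Nat.mul_le_mul_left d he1
      _ = q' := Nat.mul_div_cancel' hd
  have key : ∀ x₀ : F, x₀ ≠ 0 →
      d * δ ≤ (Finset.univ.filter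
        (fun y : F => y ≠ 0 ∧ h.eval (x₀ * y ^ d) ≠ 0)).card := by
    intro x₀ hx₀
    have hfe : ∀ y : F,
        (∑ i ∈ Finset.range t, C (c i * x₀ ^ e i) * X ^ (d * e i) : F[X]).eval y
        = h.eval (x₀ * y ^ d) := by
      intro y
      rw [hh, eval_finset_sum, eval_finset_sum]
      refine Finset.sum_congr rfl fun i _ => ?_
      simp only [eval_mul, eval_C, eval_pow, eval_X]
      rw [mul_pow, ← pow_mul, mul_assoc]
    have hnz : ∃ y : F, y ≠ 0 ∧
        (∑ i ∈ Finset.range t, C (c i * x₀ ^ e i) * X ^ (d * e i) : F[X]).eval y ≠ 0 := by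
      obtain ⟨y, hy, hyne⟩ := hnv x₀ hx₀
      exact ⟨y, hy, by rw [hfe]; exact hyne⟩
    have hcb := coset_bound13 d hd0 t i₀ hi₀1 hi₀t (fun i => c i * x₀ ^ e i) e he he0
      _ rfl hnz
    rw [hi₀δ] at hcb
    refine le_trans hcb (le_of_eq ?_)
    congr 1
    apply Finset.filter_congr
    intro y _
    rw [hfe]
  set S := Finset.univ.filter (fun x : F => x ≠ 0 ∧ h.eval x ≠ 0) with hS
  set T := Finset.univ.filter
    (fun p : F × F => p.1 ≠ 0 ∧ p.2 ≠ 0 ∧ h.eval (p.1 * p.2 ^ d) ≠ 0) with hT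
  have hTfib : T.card = ∑ x₀ ∈ (Finset.univ : Finset F),
      (T.filter (fun p => p.1 = x₀)).card :=
    Finset.card_eq_sum_card_fiberwise (fun p _ => Finset.mem_univ p.1)
  have hfib : ∀ x₀ : F, x₀ ≠ 0 → (T.filter (fun p => p.1 = x₀)).card
      = (Finset.univ.filter (fun y : F => y ≠ 0 ∧ h.eval (x₀ * y ^ d) ≠ 0)).card := by
    intro x₀ hx₀
    refine Finset.card_bij' (fun p _ => p.2) (fun y _ => (x₀, y)) ?_ ?_ ?_ ?_
    · intro p hp
      rw [Finset.mem_filter] at hp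
      obtain ⟨hpT, hp1⟩ := hp
      rw [hT, Finset.mem_filter] at hpT
      obtain ⟨-, h1, h2, h3⟩ := hpT
      rw [Finset.mem_filter]
      rw [hp1] at h3
      exact ⟨Finset.mem_univ _, h2, h3⟩
    · intro y hy
      rw [Finset.mem_filter] at hy
      rw [Finset.mem_filter, hT, Finset.mem_filter]
      exact ⟨⟨Finset.mem_univ _, hx₀, hy.2.1, hy.2.2⟩, rfl⟩
    · intro p hp
      rw [Finset.mem_filter] at hp
      rw [← hp.2]
    · intro y hy
      rfl
  have hlow : q' * (d * δ) ≤ T.card := by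
    rw [hTfib]
    calc q' * (d * δ)
        = ((Finset.univ : Finset F).erase 0).card * (d * δ) := by
          rw [Finset.card_erase_of_mem (Finset.mem_univ 0), Finset.card_univ]
      _ ≤ ∑ x₀ ∈ (Finset.univ : Finset F).erase 0,
            (T.filter (fun p => p.1 = x₀)).card := by
          rw [← smul_eq_mul]
          refine Finset.card_nsmul_le_sum _ _ _ fun x₀ hx₀ => ?_
          rw [Finset.mem_erase] at hx₀
          rw [hfib x₀ hx₀.1]
          exact key x₀ hx₀.1
      _ ≤ ∑ x₀ ∈ (Finset.univ : Finset F),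
            (T.filter (fun p => p.1 = x₀)).card :=
          Finset.sum_le_sum_of_subset (Finset.subset_univ _)
  have hTS : T.card = S.card * q' := by
    have hb : T.card = (S ×ˢ ((Finset.univ : Finset F).erase 0)).card := by
      refine Finset.card_bij' (fun p _ => (p.1 * p.2 ^ d, p.2))
        (fun p _ => (p.1 * (p.2 ^ d)⁻¹, p.2)) ?_ ?_ ?_ ?_
      · intro p hp
        rw [hT, Finset.mem_filter] at hp
        obtain ⟨-, h1, h2, h3⟩ := hp
        rw [Finset.mem_product, hS, Finset.mem_filter, Finset.mem_erase]
        exact ⟨⟨Finset.mem_univ _, mul_ne_zero h1 (pow_ne_zero _ h2), h3⟩,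
          h2, Finset.mem_univ _⟩
      · intro p hp
        rw [Finset.mem_product, hS, Finset.mem_filter, Finset.mem_erase] at hp
        obtain ⟨⟨-, h1, h2⟩, h3, -⟩ := hp
        have hpd : (p.2 : F) ^ d ≠ 0 := pow_ne_zero _ h3
        rw [hT, Finset.mem_filter]
        refine ⟨Finset.mem_univ _, mul_ne_zero h1 (inv_ne_zero hpd), h3, ?_⟩
        rw [mul_assoc, inv_mul_cancel₀ hpd, mul_one]
        exact h2
      · intro p hp
        rw [hT, Finset.mem_filter] at hp
        have hpd : (p.2 : F) ^ d ≠ 0 := pow_ne_zero _ hp.2.2.1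
        dsimp only
        rw [mul_assoc, mul_inv_cancel₀ hpd, mul_one]
      · intro p hp
        rw [Finset.mem_product, Finset.mem_erase] at hp
        have hpd : (p.2 : F) ^ d ≠ 0 := pow_ne_zero _ hp.2.1
        dsimp only
        rw [mul_assoc, inv_mul_cancel₀ hpd, mul_one]
    rw [hb, Finset.card_product, Finset.card_erase_of_mem (Finset.mem_univ 0),
      Finset.card_univ]
  have hdS : d * δ ≤ S.card := by
    rw [hTS] at hlow
    rw [mul_comm S.card q'] at hlow
    exact Nat.le_of_mul_le_mul_left hlow hq'pos
  have hsum : (Finset.univ.filter (fun x : F => x ≠ 0 ∧ h.eval x = 0)).card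
      + S.card = q' := by
    have e2 : Finset.univ.filter (fun x : F => x ≠ 0 ∧ h.eval x = 0)
        = ((Finset.univ : Finset F).erase 0).filter (fun x => ¬ h.eval x ≠ 0) := by
      ext x; simp [Finset.mem_erase, and_comm]
    have e1 : S = ((Finset.univ : Finset F).erase 0).filter (fun x => h.eval x ≠ 0) := by
      ext x; simp [hS, Finset.mem_erase, and_comm]
    rw [e1, e2, Nat.add_comm, Finset.card_filter_add_card_filter_not,
      Finset.card_erase_of_mem (Finset.mem_univ 0), Finset.card_univ]
  have hfin : (Finset.univ.filter (fun x : F => x ≠ 0 ∧ h.eval x = 0)).card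
      = q' - S.card := by omega
  rw [hfin]
  exact Nat.sub_le_sub_left hdS q'
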